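/- Let A be an m × n matrix over 𝔽₂, and for each pair (i, j) with 1 ≤ i ≤ m, 1 ≤ j ≤ n define the map G_{ij} : 𝔽₂ⁿ × 𝔽₂ᵐ → 𝔽₂ⁿ × 𝔽₂ᵐ by G_{ij}(x, z) = (x, z + A_{ij}·x_j·e_i), where e_i is the i-th standard basis vector of 𝔽₂ᵐ (this is the action of the CNOT gate CNOT(j, n+i) applied when A_{ij} = 1). Then for every list L that enumerates each pair (i, j) exactly once, the composition of the maps G_{ij} along L sends (x, 0) to (x, A·x) for every x ∈ 𝔽₂ⁿ, where A·x is the matrix–vector product over 𝔽₂. -/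

import Mathlib

/-- The action of the CNOT gate `CNOT(j, n + i)` controlled on `A i j`:
`G A i j (x, z) = (x, z + A i j * x j • e_i)`. -/
def cnotGate {m n : ℕ} (A : Matrix (Fin m) (Fin n) (ZMod 2)) (i : Fin m) (j : Fin n) :
    (Fin n → ZMod 2) × (Fin m → ZMod 2) → (Fin n → ZMod 2) × (Fin m → ZMod 2) :=
  fun xz => (xz.1, xz.2 + (A i j * xz.1 j) • (Pi.single i 1 : Fin m → ZMod 2))

lemma cnot_fold {m n : ℕ} (A : Matrix (Fin m) (Fin n) (ZMod 2))
    (x : Fin n → ZMod 2) :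
    ∀ (L : List (Fin m × Fin n)) (z : Fin m → ZMod 2),
      (L.map (fun p => cnotGate A p.1 p.2)).foldr (· ∘ ·) id (x, z) =
      (x, z + (L.map (fun p => (A p.1 p.2 * x p.2) • (Pi.single p.1 1 : Fin m → ZMod 2))).sum) := by
  intro L
  induction L with
  | nil => intro z; simp
  | cons p L ih =>
    intro z
    simp only [List.map_cons, List.foldr_cons, Function.comp_apply, ih z, cnotGate,
      List.sum_cons]
    refine Prod.ext rfl ?_
    simp [add_comm, add_assoc, add_left_comm]

/-- Theorem 3.1 of the paper: for any enumeration `L` of the index pairs `(i, j)`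
(each appearing exactly once), composing the CNOT gates along `L` sends `(x, 0)` to
`(x, A x)`, with the matrix–vector product taken over `𝔽₂`. -/
theorem matVecProd_circuit {m n : ℕ} (A : Matrix (Fin m) (Fin n) (ZMod 2))
    (L : List (Fin m × Fin n)) (hL : ∀ p : Fin m × Fin n, L.count p = 1)
    (x : Fin n → ZMod 2) :
    (L.map (fun p => cnotGate A p.1 p.2)).foldr (· ∘ ·) id (x, 0) = (x, A.mulVec x) := by
  rw [cnot_fold]
  refine Prod.ext rfl ?_
  have hnd : L.Nodup := by
    rw [List.nodup_iff_count_le_one]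
    intro p
    have h := hL p
    simp only [List.count_eq_countP] at h ⊢
    show List.countP (fun x : Fin m × Fin n => x == p) L ≤ 1
    refine le_of_eq (Eq.trans ?_ h)
    refine List.countP_congr fun a _ => ?_
    rw [Bool.eq_iff_iff]
  have htf : L.toFinset = (Finset.univ : Finset (Fin m × Fin n)) := by
    ext p
    simp [List.mem_toFinset, ← List.count_pos_iff, hL p]
  have := List.sum_toFinset (fun p : Fin m × Fin n =>
    (A p.1 p.2 * x p.2) • (Pi.single p.1 1 : Fin m → ZMod 2)) hnd
  rw [zero_add, ← this, htf]
  funext i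
  simp [Matrix.mulVec, dotProduct, Finset.sum_apply, Pi.single_apply,
    Fintype.sum_prod_type, Finset.sum_ite_eq, mul_comm]
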